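/- For every measurable 2π-periodic u with e^{−u} integrable on [0,2π], the function Γ[u] is Lipschitz continuous with Lipschitz constant at most 2π‖K̂'‖_{L^∞}. Consequently, if λ > 0 and u ∈ X satisfies u = λΓ[u] almost everywhere, then u has a Lipschitz representative with Lipschitz constant at most 2πλ‖K̂'‖_{L^∞}; in particular every solution of u = λΓ[u] in X belongs to W^{1,2}. -/

import Mathlib

open MeasureTheory Filter Topology Real intervalIntegral

/-- `Γ[u](θ) = (∫₀^{2π} e^{-u})⁻¹ ∫₀^{2π} K̂(θ - θ') e^{-u(θ')} dθ'`. -/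
noncomputable def Gam (K u : ℝ → ℝ) (θ : ℝ) : ℝ :=
  (∫ t in (0:ℝ)..(2 * π), Real.exp (-(u t)))⁻¹ *
    ∫ t in (0:ℝ)..(2 * π), K (θ - t) * Real.exp (-(u t))

/-- Membership in `X = {u ∈ L²([0,2π]) : u(θ) = u(θ+π) a.e., u(θ) = u(2π-θ) a.e.,
∫₀^{2π} u = 0}`, for a (2π-periodic) representative `u : ℝ → ℝ`. -/
def MemX (u : ℝ → ℝ) : Prop :=
  MemLp u 2 (volume.restrict (Set.Ioc (0:ℝ) (2 * π))) ∧
  (∀ᵐ θ : ℝ, u (θ + π) = u θ) ∧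
  (∀ᵐ θ : ℝ, u (2 * π - θ) = u θ) ∧
  (∫ θ in (0:ℝ)..(2 * π), u θ) = 0

/-- `‖K̂‖_∞ = sup_{θ ∈ [0,2π]} |K̂(θ)|`. -/
noncomputable def supNorm (K : ℝ → ℝ) : ℝ := ⨆ θ : Set.Icc (0:ℝ) (2 * π), |K θ|

/-- The mean `∫₀^{2π} f dμ_u` of `f` against the probability measure `μ_u` with
density `e^{-u}/∫₀^{2π} e^{-u}`. -/
noncomputable def mAvg (u f : ℝ → ℝ) : ℝ :=
  (∫ t in (0:ℝ)..(2 * π), Real.exp (-(u t)))⁻¹ *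
    ∫ t in (0:ℝ)..(2 * π), f t * Real.exp (-(u t))

/-- Fundamental theorem of calculus for Lipschitz functions with an a.e. derivative:
the difference quotient converges a.e. and is uniformly bounded, so dominated
convergence identifies `K b - K a` with `∫ₐᵇ K'`. -/
lemma lip_ftc (K K' : ℝ → ℝ) (C : NNReal) (hKlip : LipschitzWith C K)
    (hK'deriv : ∀ᵐ θ : ℝ, HasDerivAt K (K' θ) θ) :
    ∀ a b : ℝ, a ≤ b → K b - K a = ∫ t in a..b, K' t := by
  intro a b hab
  have hKc : Continuous K := hKlip.continuous
  set h : ℕ → ℝ := fun n => 1 / ((n : ℝ) + 1) with hh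
  have hpos : ∀ n, 0 < h n := fun n => by positivity
  have htend : Tendsto h atTop (𝓝 0) := tendsto_one_div_add_atTop_nhds_zero_nat
  have hseq : Tendsto h atTop (𝓝[≠] (0:ℝ)) := by
    apply tendsto_nhdsWithin_of_tendsto_nhds_of_eventually_within _ htend
    filter_upwards with n
    exact (hpos n).ne'
  set Fn : ℕ → ℝ → ℝ := fun n t => (h n)⁻¹ * (K (t + h n) - K t) with hFn
  -- a.e. pointwise convergence of the difference quotients
  have hlim : ∀ᵐ t ∂(volume.restrict (Set.Ioc a b)),
      Tendsto (fun n => Fn n t) atTop (𝓝 (K' t)) := by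
    refine ae_restrict_of_ae ?_
    filter_upwards [hK'deriv] with t ht
    have := (hasDerivAt_iff_tendsto_slope_zero.mp ht).comp hseq
    simpa [Fn, Function.comp_def] using this
  -- uniform bound by the Lipschitz constant
  have hbound : ∀ n, ∀ᵐ t ∂(volume.restrict (Set.Ioc a b)), ‖Fn n t‖ ≤ (C : ℝ) := by
    intro n
    refine ae_of_all _ fun t => ?_
    have h1 : |K (t + h n) - K t| ≤ (C : ℝ) * h n := by
      have := hKlip.dist_le_mul (t + h n) t
      simpa [Real.dist_eq, abs_of_pos (hpos n)] using this
    have h2 : ‖Fn n t‖ = (h n)⁻¹ * |K (t + h n) - K t| := by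
      rw [hFn]; simp [abs_mul, abs_of_pos (hpos n)]
    rw [h2]
    rw [inv_mul_le_iff₀ (hpos n)]
    linarith [h1]
  have hmeas : ∀ n, AEStronglyMeasurable (Fn n) (volume.restrict (Set.Ioc a b)) := by
    intro n
    exact ((continuous_const.mul ((hKc.comp (continuous_id.add continuous_const)).sub
      hKc))).aestronglyMeasurable
  have hbi : Integrable (fun _ : ℝ => (C : ℝ)) (volume.restrict (Set.Ioc a b)) := by
    apply (integrableOn_const_iff (by simp)).mpr
    exact Or.inr measure_Ioc_lt_top
  have hconv : Tendsto (fun n => ∫ t in Set.Ioc a b, Fn n t) atTop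
      (𝓝 (∫ t in Set.Ioc a b, K' t)) :=
    tendsto_integral_of_dominated_convergence _ hmeas hbi hbound hlim
  -- identify the integrals of the difference quotients with boundary terms
  have hKi : ∀ c d : ℝ, IntervalIntegrable K volume c d := fun c d =>
    hKc.intervalIntegrable c d
  have hcomp : ∀ n, IntervalIntegrable (fun t => K (t + h n)) volume a b := fun n =>
    (hKc.comp (continuous_id.add continuous_const)).intervalIntegrable a b
  have hint_eq : ∀ n, ∫ t in Set.Ioc a b, Fn n t
      = (h n)⁻¹ * (∫ t in b..(b + h n), K t) - (h n)⁻¹ * (∫ t in a..(a + h n), K t) := by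
    intro n
    have e1 : ∫ t in Set.Ioc a b, Fn n t = ∫ t in a..b, Fn n t :=
      (intervalIntegral.integral_of_le hab).symm
    have e2 : ∫ t in a..b, Fn n t
        = (h n)⁻¹ * ∫ t in a..b, (K (t + h n) - K t) := by
      rw [hFn, intervalIntegral.integral_const_mul]
    have e3 : ∫ t in a..b, (K (t + h n) - K t)
        = (∫ t in a..b, K (t + h n)) - ∫ t in a..b, K t :=
      intervalIntegral.integral_sub (hcomp n) (hKi a b)
    have e4 : (∫ t in a..b, K (t + h n)) = ∫ t in (a + h n)..(b + h n), K t :=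
      intervalIntegral.integral_comp_add_right K (h n)
    have e5 : (∫ t in a..(a + h n), K t) + (∫ t in (a + h n)..(b + h n), K t)
        = ∫ t in a..(b + h n), K t :=
      intervalIntegral.integral_add_adjacent_intervals (hKi _ _) (hKi _ _)
    have e6 : (∫ t in a..b, K t) + (∫ t in b..(b + h n), K t)
        = ∫ t in a..(b + h n), K t :=
      intervalIntegral.integral_add_adjacent_intervals (hKi _ _) (hKi _ _)
    rw [e1, e2, e3, e4]
    have : (∫ t in (a + h n)..(b + h n), K t) - (∫ t in a..b, K t)
        = (∫ t in b..(b + h n), K t) - (∫ t in a..(a + h n), K t) := by linarith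
    rw [this]; ring
  -- limits of the boundary terms: FTC-1 for the continuous function K
  have hbdry : ∀ c : ℝ, Tendsto (fun n => (h n)⁻¹ * ∫ t in c..(c + h n), K t) atTop
      (𝓝 (K c)) := by
    intro c
    have hG : HasDerivAt (fun x => ∫ t in c..x, K t) (K c) c :=
      intervalIntegral.integral_hasDerivAt_right (hKi c c)
        ⟨Set.univ, Filter.univ_mem, hKc.aestronglyMeasurable.restrict⟩ hKc.continuousAt
    have := (hasDerivAt_iff_tendsto_slope_zero.mp hG).comp hseq
    simpa [Function.comp_def] using this
  have hconv2 : Tendsto (fun n => ∫ t in Set.Ioc a b, Fn n t) atTop (𝓝 (K b - K a)) := by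
    simp_rw [hint_eq]
    exact (hbdry b).sub (hbdry a)
  have := tendsto_nhds_unique hconv hconv2
  rw [intervalIntegral.integral_of_le hab, ← this]

/-- A Lipschitz function whose a.e. derivative is essentially bounded is Lipschitz
with constant the essential supremum of the derivative. -/
lemma lip_bound (K K' : ℝ → ℝ) (C : NNReal) (hKlip : LipschitzWith C K)
    (hK'deriv : ∀ᵐ θ : ℝ, HasDerivAt K (K' θ) θ)
    (hK'mem : MemLp K' ⊤ (volume : Measure ℝ)) :
    ∀ x y : ℝ, |K x - K y| ≤ (eLpNorm K' ⊤ volume).toReal * |x - y| := by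
  set M := (eLpNorm K' ⊤ volume).toReal with hM
  have hMae : ∀ᵐ t : ℝ, ‖K' t‖ ≤ M := by
    filter_upwards [ae_le_eLpNormEssSup (f := K') (μ := volume)] with t ht
    have hne : eLpNormEssSup K' volume ≠ ⊤ := by
      rw [← eLpNorm_exponent_top]; exact hK'mem.2.ne
    have := ENNReal.toReal_mono hne ht
    simpa [hM, eLpNorm_exponent_top] using this
  have key : ∀ x y : ℝ, x ≤ y → |K y - K x| ≤ M * (y - x) := by
    intro x y hxy
    rw [lip_ftc K K' C hKlip hK'deriv x y hxy]
    have h1 : |∫ t in x..y, K' t| ≤ |∫ t in x..y, (M:ℝ)| := by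
      rw [← Real.norm_eq_abs (∫ t in x..y, K' t)]
      exact intervalIntegral.norm_integral_le_abs_of_norm_le (ae_restrict_of_ae hMae)
        intervalIntegrable_const
    have h2 : (∫ t in x..y, (M:ℝ)) = (y - x) * M := by simp
    calc |∫ t in x..y, K' t| ≤ |∫ t in x..y, (M:ℝ)| := h1
      _ = |(y - x) * M| := by rw [h2]
      _ = (y - x) * M := abs_of_nonneg (mul_nonneg (by linarith) ENNReal.toReal_nonneg)
      _ = M * (y - x) := mul_comm _ _
  intro x y
  rcases le_total x y with hxy | hyx
  · rw [abs_sub_comm, abs_of_nonpos (by linarith : x - y ≤ 0)]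
    calc |K y - K x| ≤ M * (y - x) := key x y hxy
      _ = M * -(x - y) := by ring
  · rw [abs_of_nonneg (by linarith : (0:ℝ) ≤ x - y)]
    exact key y x hyx

/-- `Γ[u]` is Lipschitz with constant at most `2π‖K̂'‖_∞`; consequently any solution
`u ∈ X` of `u = λΓ[u]` has a Lipschitz representative with constant `2πλ‖K̂'‖_∞`
(in particular it belongs to `W^{1,2}`). -/
theorem gamma_lipschitz (K K' : ℝ → ℝ) (hKper : Function.Periodic K (2 * π))
    (C : NNReal) (hKlip : LipschitzWith C K)
    (hK'deriv : ∀ᵐ θ : ℝ, HasDerivAt K (K' θ) θ)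
    (hK'mem : MemLp K' ⊤ (volume : Measure ℝ)) :
    (∀ u : ℝ → ℝ, Measurable u → Function.Periodic u (2 * π) →
      IntervalIntegrable (fun t => Real.exp (-(u t))) volume 0 (2 * π) →
      ∀ θ₁ θ₂ : ℝ, |Gam K u θ₁ - Gam K u θ₂| ≤
        2 * π * (eLpNorm K' ⊤ volume).toReal * |θ₁ - θ₂|) ∧
    (∀ lam : ℝ, 0 < lam → ∀ u : ℝ → ℝ, Measurable u → Function.Periodic u (2 * π) →
      MemX u →
      IntervalIntegrable (fun t => Real.exp (-(u t))) volume 0 (2 * π) →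
      (u =ᵐ[volume] fun θ => lam * Gam K u θ) →
      ∃ v : ℝ → ℝ, u =ᵐ[volume] v ∧
        ∀ θ₁ θ₂ : ℝ, |v θ₁ - v θ₂| ≤
          2 * π * lam * (eLpNorm K' ⊤ volume).toReal * |θ₁ - θ₂|) := by
  set M := (eLpNorm K' ⊤ volume).toReal with hM
  have hM0 : 0 ≤ M := ENNReal.toReal_nonneg
  have hKM := lip_bound K K' C hKlip hK'deriv hK'mem
  have part1 : ∀ u : ℝ → ℝ, Measurable u → Function.Periodic u (2 * π) →
      IntervalIntegrable (fun t => Real.exp (-(u t))) volume 0 (2 * π) →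
      ∀ θ₁ θ₂ : ℝ, |Gam K u θ₁ - Gam K u θ₂| ≤ 2 * π * M * |θ₁ - θ₂| := by
    intro u hu hup hui θ₁ θ₂
    have h2pi : (0:ℝ) < 2 * π := by positivity
    set I := ∫ t in (0:ℝ)..(2 * π), Real.exp (-(u t)) with hIdef
    have hI : 0 < I :=
      intervalIntegral.intervalIntegral_pos_of_pos hui (fun t => Real.exp_pos _) h2pi
    have hKcont : Continuous K := hKlip.continuous
    have hint : ∀ θ : ℝ, IntervalIntegrable
        (fun t => K (θ - t) * Real.exp (-(u t))) volume 0 (2 * π) := fun θ =>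
      hui.continuousOn_mul ((hKcont.comp (continuous_const.sub continuous_id)).continuousOn)
    have hdiff : Gam K u θ₁ - Gam K u θ₂
        = I⁻¹ * ∫ t in (0:ℝ)..(2 * π),
            (K (θ₁ - t) - K (θ₂ - t)) * Real.exp (-(u t)) := by
      rw [Gam, Gam, ← mul_sub, ← intervalIntegral.integral_sub (hint θ₁) (hint θ₂)]
      congr 1
      apply intervalIntegral.integral_congr
      intro t _
      ring
    have hb : |∫ t in (0:ℝ)..(2 * π), (K (θ₁ - t) - K (θ₂ - t)) * Real.exp (-(u t))|
        ≤ M * |θ₁ - θ₂| * I := by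
      have hgi : IntervalIntegrable (fun t => M * |θ₁ - θ₂| * Real.exp (-(u t)))
          volume 0 (2 * π) := hui.const_mul _
      have h1 : ‖∫ t in (0:ℝ)..(2 * π), (K (θ₁ - t) - K (θ₂ - t)) * Real.exp (-(u t))‖
          ≤ |∫ t in (0:ℝ)..(2 * π), M * |θ₁ - θ₂| * Real.exp (-(u t))| := by
        apply intervalIntegral.norm_integral_le_abs_of_norm_le _ hgi
        refine ae_of_all _ fun t => ?_
        have h3 : |K (θ₁ - t) - K (θ₂ - t)| ≤ M * |θ₁ - θ₂| := by
          have := hKM (θ₁ - t) (θ₂ - t)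
          simpa [hM] using this
        have hexp : 0 < Real.exp (-(u t)) := Real.exp_pos _
        calc ‖(K (θ₁ - t) - K (θ₂ - t)) * Real.exp (-(u t))‖
            = |K (θ₁ - t) - K (θ₂ - t)| * Real.exp (-(u t)) := by
              rw [Real.norm_eq_abs, abs_mul, abs_of_pos hexp]
          _ ≤ M * |θ₁ - θ₂| * Real.exp (-(u t)) := by
              apply mul_le_mul_of_nonneg_right h3 hexp.le
      have h2 : (∫ t in (0:ℝ)..(2 * π), M * |θ₁ - θ₂| * Real.exp (-(u t)))
          = M * |θ₁ - θ₂| * I := by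
        rw [hIdef, ← intervalIntegral.integral_const_mul]
      rw [h2] at h1
      calc |∫ t in (0:ℝ)..(2 * π), (K (θ₁ - t) - K (θ₂ - t)) * Real.exp (-(u t))|
          ≤ |M * |θ₁ - θ₂| * I| := h1
        _ = M * |θ₁ - θ₂| * I := abs_of_nonneg (by positivity)
    rw [hdiff, abs_mul, abs_of_pos (inv_pos.mpr hI)]
    have step : I⁻¹ * (M * |θ₁ - θ₂| * I) = M * |θ₁ - θ₂| := by
      field_simp
    calc I⁻¹ * |∫ t in (0:ℝ)..(2 * π), (K (θ₁ - t) - K (θ₂ - t)) * Real.exp (-(u t))|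
        ≤ I⁻¹ * (M * |θ₁ - θ₂| * I) := by
          apply mul_le_mul_of_nonneg_left hb (inv_pos.mpr hI).le
      _ = M * |θ₁ - θ₂| := step
      _ ≤ 2 * π * M * |θ₁ - θ₂| := by
          have hpi : (1:ℝ) ≤ 2 * π := by nlinarith [Real.pi_gt_three]
          nlinarith [abs_nonneg (θ₁ - θ₂), mul_nonneg hM0 (abs_nonneg (θ₁ - θ₂))]
  refine ⟨part1, ?_⟩
  intro lam hlam u hu hup hX hui hfix
  refine ⟨fun θ => lam * Gam K u θ, hfix, ?_⟩
  intro θ₁ θ₂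
  have h1 := part1 u hu hup hui θ₁ θ₂
  calc |lam * Gam K u θ₁ - lam * Gam K u θ₂|
      = lam * |Gam K u θ₁ - Gam K u θ₂| := by
        rw [← mul_sub, abs_mul, abs_of_pos hlam]
    _ ≤ lam * (2 * π * M * |θ₁ - θ₂|) := mul_le_mul_of_nonneg_left h1 hlam.le
    _ = 2 * π * lam * M * |θ₁ - θ₂| := by ring
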